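/- Let A = ⊕_{d≥0} A_d be a commutative ℕ-graded ring with an action of a finite group G by degree-preserving ring automorphisms, such that β(A) ≤ 1 and |G| is a unit of A. Then β(A^G) ≤ |G| (Noether's bound, the Fleischmann–Fogarty theorem). -/

import Mathlib

/-- For a family `𝒜` of "graded pieces" of `A` and a subring `B` of `A` which is graded
with respect to `𝒜`, `beta 𝒜 B = inf {n : B is generated as a ring by its elements
lying in some `𝒜 d` with `d ≤ n`}`, as an element of `ℕ ∪ {∞}`. -/
noncomputable def beta {A : Type*} [CommRing A] (𝒜 : ℕ → Set A) (B : Subring A) : ℕ∞ :=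
  sInf ((↑) '' {n : ℕ | B ≤ Subring.closure {a : A | a ∈ B ∧ ∃ d ≤ n, a ∈ 𝒜 d}})

/-- The subring `A^G` of `G`-invariant elements. -/
def fixedSubring (G A : Type*) [Group G] [CommRing A] [MulSemiringAction G A] : Subring A where
  carrier := {a : A | ∀ g : G, g • a = a}
  mul_mem' := by intro a b ha hb; intro g; rw [smul_mul', ha g, hb g]
  one_mem' := fun g => smul_one g
  add_mem' := by intro a b ha hb; intro g; rw [smul_add, ha g, hb g]
  zero_mem' := fun g => smul_zero g
  neg_mem' := by intro a ha g; rw [smul_neg, ha g]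


open Finset

set_option maxRecDepth 8000

section Aux
variable {G A : Type} [Group G] [Fintype G] [CommRing A] [MulSemiringAction G A]

private lemma fogarty [DecidableEq G] (a : G → A) (b : A) :
    ∑ t ∈ (univ : Finset G).powerset,
      (-1 : A) ^ ((univ \ t).card) * (∏ g ∈ t, g⁻¹ • a g) *
        (∑ h : G, h • ((∏ g ∈ univ \ t, a g) * b)) = 0 := by
  classical
  have key : ∀ h : G, (∏ g : G, (g⁻¹ • a g + -(h • a g))) * (h • b) = 0 := by
    intro h
    have hz : (h⁻¹)⁻¹ • a h⁻¹ + -(h • a h⁻¹) = 0 := by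
      rw [inv_inv]; exact add_neg_cancel _
    rw [Finset.prod_eq_zero (Finset.mem_univ h⁻¹) hz, zero_mul]
  have expand : ∀ h : G, (∏ g : G, (g⁻¹ • a g + -(h • a g))) * (h • b)
      = ∑ t ∈ (univ : Finset G).powerset,
          (-1 : A) ^ ((univ \ t).card) * (∏ g ∈ t, g⁻¹ • a g) *
            (h • ((∏ g ∈ univ \ t, a g) * b)) := by
    intro h
    rw [Finset.prod_add, Finset.sum_mul]
    refine Finset.sum_congr rfl fun t _ => ?_
    have h1 : ∏ g ∈ univ \ t, -(h • a g)
        = (-1 : A) ^ ((univ \ t).card) * ∏ g ∈ univ \ t, h • a g := by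
      rw [← Finset.prod_const, ← Finset.prod_mul_distrib]
      exact Finset.prod_congr rfl fun g _ => (neg_one_mul _).symm
    have h2 : ∏ g ∈ univ \ t, h • a g = h • ∏ g ∈ univ \ t, a g :=
      (map_prod (MulSemiringAction.toRingHom G A h) _ _).symm
    rw [h1, h2, smul_mul']
    ring
  calc ∑ t ∈ (univ : Finset G).powerset,
      (-1 : A) ^ ((univ \ t).card) * (∏ g ∈ t, g⁻¹ • a g) *
        (∑ h : G, h • ((∏ g ∈ univ \ t, a g) * b))
      = ∑ t ∈ (univ : Finset G).powerset, ∑ h : G,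
          (-1 : A) ^ ((univ \ t).card) * (∏ g ∈ t, g⁻¹ • a g) *
            (h • ((∏ g ∈ univ \ t, a g) * b)) := by
        simp only [Finset.mul_sum]
  _ = ∑ h : G, ∑ t ∈ (univ : Finset G).powerset,
          (-1 : A) ^ ((univ \ t).card) * (∏ g ∈ t, g⁻¹ • a g) *
            (h • ((∏ g ∈ univ \ t, a g) * b)) := Finset.sum_comm
  _ = ∑ h : G, (∏ g : G, (g⁻¹ • a g + -(h • a g))) * (h • b) :=
        Finset.sum_congr rfl fun h _ => (expand h).symm
  _ = 0 := by simp [key]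

/-- The transfer (trace) map as an additive hom. -/
private def trHom (G A : Type) [Group G] [Fintype G] [CommRing A] [MulSemiringAction G A] :
    A →+ A where
  toFun x := ∑ g : G, g • x
  map_zero' := by simp
  map_add' x y := by simp [smul_add, Finset.sum_add_distrib]

private lemma trHom_apply (x : A) : trHom G A x = ∑ g : G, g • x := rfl

private lemma trHom_invariant (h : G) (x : A) : h • trHom G A x = trHom G A x := by
  show h • ∑ g : G, g • x = ∑ g : G, g • x
  rw [Finset.smul_sum]
  exact Fintype.sum_equiv (Equiv.mulLeft h) _ _ fun g => (smul_smul h g x)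

private lemma trHom_mul_inv (x c : A) (hc : ∀ g : G, g • c = c) :
    trHom G A (x * c) = trHom G A x * c := by
  rw [trHom_apply, trHom_apply, Finset.sum_mul]
  exact Finset.sum_congr rfl fun g _ => by rw [smul_mul', hc g]

private lemma trHom_of_invariant (x : A) (hx : ∀ g : G, g • x = x) :
    trHom G A x = (Fintype.card G : A) * x := by
  rw [trHom_apply]
  simp [hx, Finset.sum_const, nsmul_eq_mul]

private lemma prod_low_deg (𝒜 : ℕ → AddSubgroup A) [GradedRing 𝒜] :
    ∀ L : List A, (∀ x ∈ L, ∃ d ≤ 1, x ∈ 𝒜 d) → ∃ d ≤ L.length, L.prod ∈ 𝒜 d := by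
  intro L
  induction L with
  | nil => exact fun _ => ⟨0, Nat.zero_le _, by simpa using SetLike.one_mem_graded 𝒜⟩
  | cons x L ih =>
    intro hent
    obtain ⟨e, he, hx⟩ := hent x List.mem_cons_self
    obtain ⟨d, hd, hL⟩ := ih fun y hy => hent y (List.mem_cons_of_mem _ hy)
    refine ⟨e + d, ?_, by simpa using SetLike.mul_mem_graded hx hL⟩
    simp only [List.length_cons]
    omega

end Aux

section Aux2
variable {G A : Type} [Group G] [Fintype G] [CommRing A] [MulSemiringAction G A]

/-- the target subring: generated by invariants of degree at most `|G|`. -/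
private def CC (G A : Type) [Group G] [Fintype G] [CommRing A] [MulSemiringAction G A]
    (𝒜 : ℕ → AddSubgroup A) : Subring A :=
  Subring.closure {a : A | a ∈ fixedSubring G A ∧ ∃ d ≤ Nat.card G, a ∈ (𝒜 d : Set A)}

private lemma tr_short_mem (𝒜 : ℕ → AddSubgroup A) [GradedRing 𝒜]
    (hdeg : ∀ (g : G) (d : ℕ), ∀ a ∈ 𝒜 d, g • a ∈ 𝒜 d) (L : List A)
    (hlen : L.length ≤ Nat.card G) (hent : ∀ x ∈ L, ∃ d ≤ 1, x ∈ 𝒜 d) :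
    trHom G A L.prod ∈ CC G A 𝒜 := by
  obtain ⟨d, hd, hm⟩ := prod_low_deg 𝒜 L hent
  refine Subring.subset_closure ⟨fun h => trHom_invariant h _, d, hd.trans hlen, ?_⟩
  exact AddSubgroup.sum_mem _ fun g _ => hdeg g d _ hm

private lemma key_lemma (𝒜 : ℕ → AddSubgroup A) [GradedRing 𝒜]
    (hdeg : ∀ (g : G) (d : ℕ), ∀ a ∈ 𝒜 d, g • a ∈ 𝒜 d)
    (u : A) (hu : (Nat.card G : A) * u = 1) (huC : u ∈ CC G A 𝒜) :
    ∀ (k : ℕ) (L : List A), L.length = k → (∀ x ∈ L, ∃ d ≤ 1, x ∈ 𝒜 d) →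
      trHom G A L.prod ∈ CC G A 𝒜 := by
  classical
  intro k
  induction k using Nat.strong_induction_on with
  | _ k ih =>
  intro L hlen hent
  by_cases hk : L.length ≤ Nat.card G
  · exact tr_short_mem 𝒜 hdeg L hk hent
  · push_neg at hk
    have hcard : Fintype.card G = Nat.card G := Nat.card_eq_fintype_card.symm
    set n := Nat.card G with hn
    set L₁ := L.take n with hL₁
    set L₂ := L.drop n with hL₂
    have hL1len : L₁.length = n := by
      simp only [hL₁, List.length_take]
      omega
    have hL2len : L₂.length = L.length - n := by simp [hL₂]
    let e : G ≃ Fin L₁.length := (Fintype.equivFin G).trans (finCongr (by rw [hcard, hL1len]))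
    set a : G → A := fun g => L₁.get (e g) with ha
    have haT : ∀ g, ∃ d ≤ 1, a g ∈ 𝒜 d :=
      fun g => hent _ (List.take_subset n L (List.get_mem L₁ (e g)))
    have hprodL1 : ∏ g : G, a g = L₁.prod := by
      rw [ha]
      rw [Equiv.prod_comp e (fun i => L₁.get i)]
      simp only [List.get_eq_getElem]
      exact Fin.prod_univ_getElem L₁
    -- the Fogarty identity
    have hf := fogarty a L₂.prod
    set F : Finset G → A := fun t =>
      (-1 : A) ^ ((univ \ t).card) * (∏ g ∈ t, g⁻¹ • a g) *
        (∑ h : G, h • ((∏ g ∈ univ \ t, a g) * L₂.prod)) with hF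
    have hsplit : F ∅ + ∑ t ∈ ((univ : Finset G).powerset).erase ∅, F t = 0 := by
      rw [Finset.add_sum_erase _ F (Finset.empty_mem_powerset _)]
      exact hf
    set s : A := (-1 : A) ^ (Fintype.card G) with hs
    have hss : s * s = 1 := by
      rw [hs, ← pow_add]
      exact Even.neg_one_pow ⟨Fintype.card G, rfl⟩
    have hFempty : F ∅ = s * trHom G A L.prod := by
      rw [hF]
      simp only [Finset.sdiff_empty, Finset.prod_empty, Finset.card_univ, mul_one]
      rw [hprodL1]
      rw [show L₁.prod * L₂.prod = L.prod from List.prod_take_mul_prod_drop L n]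
      rfl
    have hEq : trHom G A L.prod = ∑ t ∈ ((univ : Finset G).powerset).erase ∅, -(s * F t) := by
      have h1 : s * F ∅ = trHom G A L.prod := by rw [hFempty, ← mul_assoc, hss, one_mul]
      calc trHom G A L.prod = s * F ∅ := h1.symm
        _ = s * (-(∑ t ∈ ((univ : Finset G).powerset).erase ∅, F t)) := by
            rw [eq_neg_of_add_eq_zero_left hsplit]
        _ = ∑ t ∈ ((univ : Finset G).powerset).erase ∅, -(s * F t) := by
            rw [mul_neg, Finset.mul_sum, ← Finset.sum_neg_distrib]
    -- apply the trace to both sides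
    have htr := congrArg (trHom G A) hEq
    rw [map_sum] at htr
    rw [trHom_of_invariant _ (fun h => trHom_invariant h _)] at htr
    have hmem : ∑ t ∈ ((univ : Finset G).powerset).erase ∅, trHom G A (-(s * F t)) ∈ CC G A 𝒜 := by
      refine Subring.sum_mem _ fun t ht => ?_
      rw [map_neg]
      refine neg_mem ?_
      have htne : t ≠ ∅ := (Finset.mem_erase.mp ht).1
      have htcard : 1 ≤ t.card := Finset.card_pos.mpr (Finset.nonempty_iff_ne_empty.mpr htne)
      set P : A := ∏ g ∈ t, g⁻¹ • a g with hP
      set τ : A := ∑ h : G, h • ((∏ g ∈ univ \ t, a g) * L₂.prod) with hτ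
      have hτtr : τ = trHom G A ((∏ g ∈ univ \ t, a g) * L₂.prod) := rfl
      set c : A := s * ((-1 : A) ^ ((univ \ t).card) * τ) with hc
      have hpinv : ∀ (g : G) (m : ℕ), g • ((-1 : A) ^ m) = (-1 : A) ^ m := fun g m => by
        rw [show g • ((-1 : A) ^ m) = (g • (-1 : A)) ^ m from
          map_pow (MulSemiringAction.toRingHom G A g) _ m, smul_neg, smul_one]
      have hcinv : ∀ g : G, g • c = c := by
        intro g
        rw [hc, hs, smul_mul', smul_mul', hpinv, hpinv, hτtr, trHom_invariant]
      have hrw : s * F t = P * c := by rw [hF, hc, hP, hτ]; ring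
      rw [hrw, trHom_mul_inv _ _ hcinv]
      have hPmem : trHom G A P ∈ CC G A 𝒜 := by
        have hPl : P = (t.toList.map (fun g => g⁻¹ • a g)).prod := by
          rw [hP, Finset.prod_map_toList]
        rw [hPl]
        refine tr_short_mem 𝒜 hdeg _ ?_ ?_
        · rw [List.length_map, Finset.length_toList]
          exact le_trans (Finset.card_le_univ t) hcard.le
        · intro x hx
          obtain ⟨g, -, rfl⟩ := List.mem_map.mp hx
          obtain ⟨d, hd, hm⟩ := haT g
          exact ⟨d, hd, hdeg g⁻¹ d _ hm⟩
      have hτmem : τ ∈ CC G A 𝒜 := by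
        rw [hτtr]
        set Lt : List A := ((univ \ t).toList.map a) ++ L₂ with hLt
        have hprod : (∏ g ∈ univ \ t, a g) * L₂.prod = Lt.prod := by
          rw [hLt, List.prod_append, Finset.prod_map_toList]
        rw [hprod]
        have h1 : (univ \ t).card = n - t.card := by
          rw [Finset.card_sdiff_of_subset (Finset.subset_univ t), Finset.card_univ, hcard]
        have h2 : Lt.length = (univ \ t).card + L₂.length := by
          rw [hLt, List.length_append, List.length_map, Finset.length_toList]
        have e1 : Lt.length = (n - t.card) + (L.length - n) := by rw [h2, h1, hL2len]
        have e2 : n < L.length := hk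
        have e5 : t.card ≤ n := le_trans (Finset.card_le_univ t) hcard.le
        have e4 : L.length = k := hlen
        refine ih Lt.length ?_ Lt rfl ?_
        · clear_value n L₁ L₂ Lt
          omega
        · intro x hx
          rw [hLt, List.mem_append] at hx
          rcases hx with hx | hx
          · obtain ⟨g, -, rfl⟩ := List.mem_map.mp hx
            exact haT g
          · exact hent x (List.drop_subset n L hx)
      have hcmem : c ∈ CC G A 𝒜 := by
        rw [hc]
        refine Subring.mul_mem _ ?_ (Subring.mul_mem _ ?_ hτmem)
        · exact Subring.pow_mem _ (Subring.neg_mem _ (Subring.one_mem _)) _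
        · exact Subring.pow_mem _ (Subring.neg_mem _ (Subring.one_mem _)) _
      exact Subring.mul_mem _ hPmem hcmem
    rw [← htr] at hmem
    have hcast : ((Fintype.card G : ℕ) : A) = ((Nat.card G : ℕ) : A) := by rw [hcard]
    have hfinal : trHom G A L.prod = u * ((Fintype.card G : A) * trHom G A L.prod) := by
      rw [hcast, ← mul_assoc, mul_comm u, hu, one_mul]
    rw [hfinal]
    exact Subring.mul_mem _ huC hmem



private lemma tr_mem_all (𝒜 : ℕ → AddSubgroup A) [GradedRing 𝒜]
    (hdeg : ∀ (g : G) (d : ℕ), ∀ a ∈ 𝒜 d, g • a ∈ 𝒜 d)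
    (u : A) (hu : (Nat.card G : A) * u = 1) (huC : u ∈ CC G A 𝒜)
    (htop : ∀ x : A, x ∈ Subring.closure {a : A | ∃ d ≤ 1, a ∈ (𝒜 d : Set A)}) (x : A) :
    trHom G A x ∈ CC G A 𝒜 := by
  have hx := (Subring.mem_closure_iff).mp (htop x)
  induction hx using AddSubgroup.closure_induction with
  | mem y hy =>
      obtain ⟨L, hL, rfl⟩ := Submonoid.exists_list_of_mem_closure hy
      exact key_lemma 𝒜 hdeg u hu huC L.length L rfl fun z hz => hL z hz
  | zero => rw [map_zero]; exact Subring.zero_mem _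
  | add y z _ _ hy hz => rw [map_add]; exact Subring.add_mem _ hy hz
  | neg y _ hy => rw [map_neg]; exact Subring.neg_mem _ hy

end Aux2

/-- Noether's bound; the Fleischmann–Fogarty theorem.
Let `A = ⊕_{d ≥ 0} A_d` be a commutative `ℕ`-graded ring with an action of a finite
group `G` by degree-preserving ring automorphisms, such that `β(A) ≤ 1` and `|G|` is
a unit of `A`.  Then `β(A^G) ≤ |G|`, where `A^G` carries the induced grading. -/
theorem beta_fixed_le_card {G A : Type} [Group G] [Finite G] [CommRing A]
    [MulSemiringAction G A] (𝒜 : ℕ → AddSubgroup A) [GradedRing 𝒜]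
    (hdeg : ∀ (g : G) (d : ℕ), ∀ a ∈ 𝒜 d, g • a ∈ 𝒜 d)
    (hbeta : beta (fun d => (𝒜 d : Set A)) ⊤ ≤ 1)
    (hunit : IsUnit ((Nat.card G : A))) :
    beta (fun d => (𝒜 d : Set A)) (fixedSubring G A) ≤ (Nat.card G : ℕ∞) := by
  classical
  letI : Fintype G := Fintype.ofFinite G
  obtain ⟨v, hv⟩ := hunit
  set u : A := ((v⁻¹ : Aˣ) : A) with hud
  have hu : (Nat.card G : A) * u = 1 := by rw [← hv]; exact Units.mul_inv v
  have hNinv : ∀ (g : G) (k : ℕ), g • ((k : A)) = (k : A) := fun g k =>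
    map_natCast (MulSemiringAction.toRingHom G A g) k
  have huinv : ∀ g : G, g • u = u := by
    intro g
    have h1 : (Nat.card G : A) * (g • u) = 1 := by
      have h0 := congrArg (fun z => g • z) hu
      simpa [smul_mul', hNinv] using h0
    calc g • u = 1 * (g • u) := (one_mul _).symm
      _ = ((Nat.card G : A) * u) * (g • u) := by rw [hu]
      _ = u * ((Nat.card G : A) * (g • u)) := by ring
      _ = u * 1 := by rw [h1]
      _ = u := mul_one u
  have h1mem : (1 : A) ∈ 𝒜 0 := SetLike.one_mem_graded 𝒜
  have hu0 : u ∈ 𝒜 0 := by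
    have hcomp : ∀ i : ℕ, i ≠ 0 → (DirectSum.decompose 𝒜 u i : A) = 0 := by
      intro i hi
      set φ : A →+ A :=
        ((𝒜 i).subtype.comp ((DFinsupp.evalAddMonoidHom i).comp
          (DirectSum.decomposeAddEquiv 𝒜).toAddMonoidHom)) with hφ
      have hφ1 : φ 1 = 0 := by
        show ((DirectSum.decompose 𝒜 (1 : A) i : A)) = 0
        exact DirectSum.decompose_of_mem_ne 𝒜 h1mem (Ne.symm hi)
      have hφu : φ u = (DirectSum.decompose 𝒜 u i : A) := rfl
      have h2 : (1 : A) = (Nat.card G) • u := by rw [nsmul_eq_mul, hu]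
      have h3 : (Nat.card G : A) * (DirectSum.decompose 𝒜 u i : A) = 0 := by
        calc (Nat.card G : A) * (DirectSum.decompose 𝒜 u i : A)
            = (Nat.card G) • (DirectSum.decompose 𝒜 u i : A) := (nsmul_eq_mul _ _).symm
          _ = (Nat.card G) • (φ u) := by rw [hφu]
          _ = φ ((Nat.card G) • u) := (map_nsmul φ _ _).symm
          _ = φ 1 := by rw [← h2]
          _ = 0 := hφ1
      have h4 : (DirectSum.decompose 𝒜 u i : A)
          = u * ((Nat.card G : A) * (DirectSum.decompose 𝒜 u i : A)) := by
        rw [← mul_assoc, mul_comm u, hu, one_mul]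
      rw [h4, h3, mul_zero]
    rw [← DirectSum.sum_support_decompose 𝒜 u]
    refine AddSubgroup.sum_mem _ fun i _ => ?_
    by_cases h0 : i = 0
    · subst h0; exact SetLike.coe_mem _
    · rw [hcomp i h0]; exact zero_mem _
  have huC : u ∈ CC G A 𝒜 := Subring.subset_closure ⟨huinv, 0, Nat.zero_le _, hu0⟩
  have hex : ∃ m : ℕ, (m : ℕ∞) < 2 ∧ (⊤ : Subring A) ≤ Subring.closure
      {a : A | a ∈ (⊤ : Subring A) ∧ ∃ d ≤ m, a ∈ (𝒜 d : Set A)} := by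
    have hlt : beta (fun d => ((𝒜 d : Set A))) ⊤ < 2 := lt_of_le_of_lt hbeta (by norm_num)
    obtain ⟨x, hxs, hx2⟩ := sInf_lt_iff.mp hlt
    obtain ⟨m, hm, rfl⟩ := hxs
    exact ⟨m, hx2, hm⟩
  obtain ⟨m, hm2, hmtop⟩ := hex
  have hm1 : m ≤ 1 := by
    have hmm : m < 2 := by exact_mod_cast hm2
    omega
  have htop : ∀ x : A, x ∈ Subring.closure {a : A | ∃ d ≤ 1, a ∈ (𝒜 d : Set A)} := by
    intro x
    refine Subring.closure_mono ?_ (hmtop (Subring.mem_top x))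
    rintro y ⟨-, d, hd, hyd⟩
    exact ⟨d, hd.trans hm1, hyd⟩
  have hfix : fixedSubring G A ≤ CC G A 𝒜 := by
    intro x hx
    have hxi : ∀ g : G, g • x = x := hx
    have h1 : trHom G A x = (Fintype.card G : A) * x := trHom_of_invariant x hxi
    have h2 : x = u * trHom G A x := by
      rw [h1, show ((Fintype.card G : ℕ) : A) = ((Nat.card G : ℕ) : A) by
        rw [Nat.card_eq_fintype_card], ← mul_assoc, mul_comm u, hu, one_mul]
    rw [h2]
    exact Subring.mul_mem _ huC (tr_mem_all 𝒜 hdeg u hu huC htop x)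
  exact sInf_le ⟨Nat.card G, hfix, rfl⟩
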